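/- Under the hypotheses of Theorem 1(b) — utilities U_j concave, twice differentiable, strictly increasing coordinatewise, and G_{ijk} > 0 — if the collection of power vectors (p_j) is Pareto optimal, then there exist nonnegative load factors s_{ik} and bounds λ_j such that each p_j maximizes U_j(p) subject to Σ_k r_{jk} p_k ≤ λ_j, where r_{jk} = Σ_i G_{ijk} s_{ik}. -/

import Mathlib

open Finset

namespace Stmt7Aux

lemma combo_lt {a b s t s' t' : ℝ} (ha : 0 ≤ a) (hb : 0 ≤ b) (hab : a + b = 1)
    (h1 : s < s') (h2 : t < t') : a * s + b * t < a * s' + b * t' := by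
  rcases ha.lt_or_eq with ha' | ha'
  · have h3 := mul_lt_mul_of_pos_left h1 ha'
    have h4 := mul_le_mul_of_nonneg_left h2.le hb
    linarith
  · have hb1 : b = 1 := by linarith
    subst hb1; rw [← ha']; simpa using h2

variable {N K : ℕ} {M : Fin K → ℕ}

/-- interference at receiver `t = ⟨k, i⟩` -/
def interf (G : ∀ k : Fin K, Fin (M k) → Fin N → ℝ) (p : Fin N → Fin K → ℝ)
    (t : (k : Fin K) × Fin (M k)) : ℝ := ∑ j, G t.1 t.2 j * p j t.1

lemma interf_combo (G : ∀ k : Fin K, Fin (M k) → Fin N → ℝ) (px py : Fin N → Fin K → ℝ)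
    (a b : ℝ) (t : (k : Fin K) × Fin (M k)) :
    interf G (a • px + b • py) t = a * interf G px t + b * interf G py t := by
  simp only [interf, Finset.mul_sum, ← Finset.sum_add_distrib]
  exact Finset.sum_congr rfl fun j _ => by
    simp only [Pi.add_apply, Pi.smul_apply, smul_eq_mul]; ring

/-- the open set of strictly dominating (utility, interference) profiles -/
def better (G : ∀ k : Fin K, Fin (M k) → Fin N → ℝ) (U : Fin N → (Fin K → ℝ) → ℝ) :
    Set ((Fin N ⊕ ((k : Fin K) × Fin (M k))) → ℝ) :=
  {x | ∃ p' : Fin N → Fin K → ℝ,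
    (∀ j, x (Sum.inl j) < U j (p' j)) ∧ ∀ t, interf G p' t < x (Sum.inr t)}

lemma isOpen_better (G : ∀ k : Fin K, Fin (M k) → Fin N → ℝ)
    (U : Fin N → (Fin K → ℝ) → ℝ) : IsOpen (better G U) := by
  have : better G U = ⋃ p' : Fin N → Fin K → ℝ,
      Set.univ.pi (fun i => Sum.rec (fun j => Set.Iio (U j (p' j)))
        (fun t => Set.Ioi (interf G p' t)) i) := by
    ext x
    simp [better, Set.mem_pi, Sum.forall]
  rw [this]
  refine isOpen_iUnion fun p' => isOpen_set_pi Set.finite_univ fun i _ => ?_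
  cases i with
  | inl j => exact isOpen_Iio
  | inr t => exact isOpen_Ioi

lemma convex_better (G : ∀ k : Fin K, Fin (M k) → Fin N → ℝ)
    (U : Fin N → (Fin K → ℝ) → ℝ) (hU_concave : ∀ j, ConcaveOn ℝ Set.univ (U j)) :
    Convex ℝ (better G U) := by
  rintro x ⟨px, hx1, hx2⟩ y ⟨py, hy1, hy2⟩ a b ha hb hab
  refine ⟨a • px + b • py, fun j => ?_, fun t => ?_⟩
  · have hcon := (hU_concave j).2 (Set.mem_univ (px j)) (Set.mem_univ (py j)) ha hb hab
    simp only [smul_eq_mul] at hcon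
    have h1 : a * x (Sum.inl j) + b * y (Sum.inl j)
        < a * U j (px j) + b * U j (py j) := combo_lt ha hb hab (hx1 j) (hy1 j)
    have h2 : (a • px + b • py) j = a • px j + b • py j := rfl
    rw [h2]
    calc (a • x + b • y) (Sum.inl j) = a * x (Sum.inl j) + b * y (Sum.inl j) := rfl
      _ < a * U j (px j) + b * U j (py j) := h1
      _ ≤ U j (a • px j + b • py j) := hcon
  · rw [interf_combo]
    exact combo_lt ha hb hab (hx2 t) (hy2 t)

end Stmt7Aux

/-- Theorem 1(b) (converse): if the utilities are concave, twice continuously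
differentiable and strictly increasing coordinatewise, all gains are positive, and
the collection of power vectors `p` is Pareto optimal, then there exist nonnegative
load factors `s k i` and bounds `λ j` such that each `p j` maximizes `U j` subject
to the spillage constraint `∑ k, r j k * q k ≤ λ j` with `r j k = ∑ i, G k i j * s k i`. -/
theorem stmt_7
    (N K : ℕ) (M : Fin K → ℕ)
    (G : ∀ k : Fin K, Fin (M k) → Fin N → ℝ)
    (U : Fin N → (Fin K → ℝ) → ℝ)
    (p : Fin N → Fin K → ℝ)
    (hG : ∀ (k : Fin K) (i : Fin (M k)) (j : Fin N), 0 < G k i j)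
    (hU_concave : ∀ j, ConcaveOn ℝ Set.univ (U j))
    (hU_smooth : ∀ j, ContDiff ℝ 2 (U j))
    (hU_mono : ∀ (j : Fin N) (q : Fin K → ℝ) (k : Fin K) (x y : ℝ), x < y →
      U j (Function.update q k x) < U j (Function.update q k y))
    -- Pareto optimality: no alternative powers weakly improve all utilities and all
    -- interferences with at least one strict improvement.
    (h_pareto : ¬ ∃ p' : Fin N → Fin K → ℝ,
      (∀ j, U j (p j) ≤ U j (p' j)) ∧
      (∀ (k : Fin K) (i : Fin (M k)), (∑ j, G k i j * p' j k) ≤ ∑ j, G k i j * p j k) ∧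
      ((∃ j, U j (p j) < U j (p' j)) ∨
       (∃ (k : Fin K) (i : Fin (M k)), (∑ j, G k i j * p' j k) < ∑ j, G k i j * p j k))) :
    ∃ (s : ∀ k : Fin K, Fin (M k) → ℝ) (lam : Fin N → ℝ),
      (∀ (k : Fin K) (i : Fin (M k)), 0 ≤ s k i) ∧
      (∀ j, ∑ k, (∑ i, G k i j * s k i) * p j k ≤ lam j) ∧
      (∀ (j : Fin N) (q : Fin K → ℝ),
        ∑ k, (∑ i, G k i j * s k i) * q k ≤ lam j → U j q ≤ U j (p j)) := by
  classical
  rcases Nat.eq_zero_or_pos N with hN | hN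
  · subst hN
    exact ⟨fun k _ => 0, fun j => 0, fun k i => le_refl 0, fun j => j.elim0, fun j => j.elim0⟩
  rcases Nat.eq_zero_or_pos K with hK | hK
  · subst hK
    refine ⟨fun k => k.elim0, fun _ => 0, fun k => k.elim0, fun j => by simp, fun j q _ => ?_⟩
    have hq : q = p j := funext fun k => k.elim0
    rw [hq]
  -- main case
  set ι := Fin N ⊕ ((k : Fin K) × Fin (M k)) with hι
  set x₀ : ι → ℝ :=
    Sum.elim (fun j => U j (p j)) (fun t => Stmt7Aux.interf G p t) with hx₀def
  have hx₀ : x₀ ∉ Stmt7Aux.better G U := by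
    rintro ⟨p', h1, h2⟩
    exact h_pareto ⟨p', fun j => (h1 j).le, fun k i => (h2 ⟨k, i⟩).le,
      Or.inl ⟨⟨0, hN⟩, h1 _⟩⟩
  obtain ⟨f, hf⟩ := geometric_hahn_banach_open_point
    (Stmt7Aux.convex_better G U hU_concave) (Stmt7Aux.isOpen_better G U) hx₀
  set coef : ι → ℝ := fun i => f (fun i' => if i = i' then 1 else 0) with hcoef
  have hexp : ∀ y : ι → ℝ, f y = ∑ i, y i * coef i := by
    intro y
    conv_lhs => rw [pi_eq_sum_univ y]
    rw [map_sum]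
    exact Finset.sum_congr rfl fun i _ => by rw [map_smul]; simp [coef, smul_eq_mul]; exact Or.inl (by congr!)
  set α : Fin N → ℝ := fun j => coef (Sum.inl j) with hα
  set β : ((k : Fin K) × Fin (M k)) → ℝ := fun t => coef (Sum.inr t) with hβ
  have hsplit : ∀ y : ι → ℝ,
      f y = ∑ j, y (Sum.inl j) * α j + ∑ t, y (Sum.inr t) * β t := by
    intro y
    rw [hexp, Fintype.sum_sum_type]
  -- the base point of the open set
  set y1 : ι → ℝ :=
    Sum.elim (fun j => U j (p j) - 1) (fun t => Stmt7Aux.interf G p t + 1) with hy1def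
  have hy1 : y1 ∈ Stmt7Aux.better G U :=
    ⟨p, fun j => by simp [y1], fun t => by simp [y1]⟩
  have hy1lt : f y1 < f x₀ := hf y1 hy1
  -- signs of coefficients
  have hαneg : ∀ j, 0 ≤ α j := by
    intro j
    by_contra hneg
    push_neg at hneg
    obtain ⟨c, hc⟩ : ∃ c : ℝ, c = 1 + (f x₀ - f y1 + 1) / (-α j) := ⟨_, rfl⟩
    have hc1 : 1 < c := by
      have h0 : 0 < (f x₀ - f y1 + 1) / (-α j) :=
        div_pos (by linarith) (by linarith)
      rw [hc]; linarith
    set e : ι → ℝ := fun i' => if Sum.inl j = i' then 1 else 0 with he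
    have hyc : y1 + (1 - c) • e ∈ Stmt7Aux.better G U := by
      refine ⟨p, fun j' => ?_, fun t => ?_⟩
      · by_cases hjj : j = j'
        · subst hjj
          simp only [Pi.add_apply, Pi.smul_apply, he, eq_self_iff_true, if_true, smul_eq_mul, mul_one,
            hy1def, Sum.elim_inl]
          linarith
        · have : Sum.inl j ≠ (Sum.inl j' : ι) := fun h => hjj (Sum.inl.inj h)
          simp only [Pi.add_apply, Pi.smul_apply, he, if_neg this, smul_eq_mul, mul_zero,
            add_zero, hy1def, Sum.elim_inl]
          linarith
      · have : Sum.inl j ≠ (Sum.inr t : ι) := fun h => by simp at h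
        simp only [Pi.add_apply, Pi.smul_apply, he, if_neg this, smul_eq_mul, mul_zero,
          add_zero, hy1def, Sum.elim_inr]
        linarith
    have hfe : f e = α j := by rw [hα, hcoef]
    have := hf _ hyc
    rw [map_add, map_smul, smul_eq_mul, hfe] at this
    have hcm : (1 - c) * α j = f x₀ - f y1 + 1 := by
      have hne : -α j ≠ 0 := by linarith
      rw [hc]; linear_combination div_mul_cancel₀ (f x₀ - f y1 + 1) hne
    rw [hcm] at this
    linarith
  have hβneg : ∀ t, β t ≤ 0 := by
    intro t₀
    by_contra hpos
    push_neg at hpos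
    obtain ⟨c, hc⟩ : ∃ c : ℝ, c = 1 + (f x₀ - f y1 + 1) / (β t₀) := ⟨_, rfl⟩
    have hc1 : 1 < c := by
      have h0 : 0 < (f x₀ - f y1 + 1) / (β t₀) := div_pos (by linarith) hpos
      rw [hc]; linarith
    set e : ι → ℝ := fun i' => if Sum.inr t₀ = i' then 1 else 0 with he
    have hyc : y1 + (c - 1) • e ∈ Stmt7Aux.better G U := by
      refine ⟨p, fun j' => ?_, fun t => ?_⟩
      · have : (Sum.inr t₀ : ι) ≠ Sum.inl j' := fun h => by simp at h
        simp only [Pi.add_apply, Pi.smul_apply, he, if_neg this, smul_eq_mul, mul_zero,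
          add_zero, hy1def, Sum.elim_inl]
        linarith
      · by_cases htt : t₀ = t
        · subst htt
          simp only [Pi.add_apply, Pi.smul_apply, he, eq_self_iff_true, if_true, smul_eq_mul, mul_one,
            hy1def, Sum.elim_inr]
          linarith
        · have : (Sum.inr t₀ : ι) ≠ Sum.inr t := fun h => htt (Sum.inr.inj h)
          simp only [Pi.add_apply, Pi.smul_apply, he, if_neg this, smul_eq_mul, mul_zero,
            add_zero, hy1def, Sum.elim_inr]
          linarith
    have hfe : f e = β t₀ := by rw [hβ, hcoef]
    have := hf _ hyc
    rw [map_add, map_smul, smul_eq_mul, hfe] at this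
    have hcm : (c - 1) * β t₀ = f x₀ - f y1 + 1 := by
      rw [hc]; linear_combination div_mul_cancel₀ (f x₀ - f y1 + 1) hpos.ne'
    rw [hcm] at this
    linarith
  -- master inequality
  have hx₀exp : f x₀ = ∑ j, U j (p j) * α j + ∑ t, Stmt7Aux.interf G p t * β t := by
    rw [hsplit]
    simp [hx₀def]
  have hmaster : ∀ p' : Fin N → Fin K → ℝ,
      ∑ j, U j (p' j) * α j + ∑ t, Stmt7Aux.interf G p' t * β t ≤ f x₀ := by
    intro p'
    set L : ℝ := ∑ j, U j (p' j) * α j + ∑ t, Stmt7Aux.interf G p' t * β t with hL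
    set D : ℝ := (∑ j, α j) - ∑ t, β t with hD
    have hDnn : 0 ≤ D := by
      have h1 : (0:ℝ) ≤ ∑ j, α j := Finset.sum_nonneg fun j _ => hαneg j
      have h2 : (∑ t, β t) ≤ 0 := Finset.sum_nonpos fun t _ => hβneg t
      simp only [hD]; linarith
    have hstep : ∀ ε : ℝ, 0 < ε → L - ε * D < f x₀ := by
      intro ε hε
      set yε : ι → ℝ :=
        Sum.elim (fun j => U j (p' j) - ε) (fun t => Stmt7Aux.interf G p' t + ε) with hyε
      have hmem : yε ∈ Stmt7Aux.better G U :=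
        ⟨p', fun j => by simp [hyε, hε], fun t => by simp [hyε, hε]⟩
      have hval : f yε = L - ε * D := by
        rw [hsplit]
        simp only [hyε, Sum.elim_inl, Sum.elim_inr]
        have e1 : ∑ j, (U j (p' j) - ε) * α j
            = (∑ j, U j (p' j) * α j) - ε * ∑ j, α j := by
          rw [Finset.mul_sum, ← Finset.sum_sub_distrib]
          exact Finset.sum_congr rfl fun j _ => by ring
        have e2 : ∑ t, (Stmt7Aux.interf G p' t + ε) * β t
            = (∑ t, Stmt7Aux.interf G p' t * β t) + ε * ∑ t, β t := by
          rw [Finset.mul_sum, ← Finset.sum_add_distrib]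
          exact Finset.sum_congr rfl fun t _ => by ring
        rw [e1, e2, hL, hD]
        ring
      have := hf yε hmem
      rw [hval] at this
      exact this
    by_contra hcon
    push_neg at hcon
    have hD1 : (0:ℝ) < D + 1 := by linarith
    have hδ : 0 < L - f x₀ := by linarith
    have h1 := hstep ((L - f x₀) / (D + 1)) (div_pos hδ hD1)
    have h2 : (L - f x₀) / (D + 1) * D < L - f x₀ := by
      rw [div_mul_eq_mul_div, div_lt_iff₀ hD1]
      nlinarith
    linarith
  -- per-player inequality via updates
  have hkey : ∀ (j : Fin N) (q : Fin K → ℝ),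
      α j * (U j q - U j (p j)) ≤
        ∑ k, (∑ i, G k i j * (-β ⟨k, i⟩)) * (q k - p j k) := by
    intro j q
    have hm := hmaster (Function.update p j q)
    rw [hx₀exp] at hm
    have eU : ∑ j', U j' (Function.update p j q j') * α j'
        = (∑ j', U j' (p j') * α j') + (U j q * α j - U j (p j) * α j) := by
      rw [Finset.sum_eq_sum_sdiff_singleton_add (Finset.mem_univ j)
        (fun j' => U j' (Function.update p j q j') * α j'),
        Finset.sum_eq_sum_sdiff_singleton_add (Finset.mem_univ j)
        (fun j' => U j' (p j') * α j')]
      have hrest : ∑ j' ∈ Finset.univ \ {j}, U j' (Function.update p j q j') * α j'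
          = ∑ j' ∈ Finset.univ \ {j}, U j' (p j') * α j' := by
        refine Finset.sum_congr rfl fun j' hj' => ?_
        have : j' ≠ j := by
          simpa using (Finset.mem_sdiff.1 hj').2
        rw [Function.update_of_ne this]
      rw [hrest, Function.update_self]
      ring
    have eI : ∀ t, Stmt7Aux.interf G (Function.update p j q) t
        = Stmt7Aux.interf G p t + G t.1 t.2 j * (q t.1 - p j t.1) := by
      intro t
      unfold Stmt7Aux.interf
      rw [Finset.sum_eq_sum_sdiff_singleton_add (Finset.mem_univ j)
        (fun j' => G t.1 t.2 j' * Function.update p j q j' t.1),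
        Finset.sum_eq_sum_sdiff_singleton_add (Finset.mem_univ j)
        (fun j' => G t.1 t.2 j' * p j' t.1)]
      have hrest : ∑ j' ∈ Finset.univ \ {j}, G t.1 t.2 j' * Function.update p j q j' t.1
          = ∑ j' ∈ Finset.univ \ {j}, G t.1 t.2 j' * p j' t.1 := by
        refine Finset.sum_congr rfl fun j' hj' => ?_
        have : j' ≠ j := by simpa using (Finset.mem_sdiff.1 hj').2
        rw [Function.update_of_ne this]
      rw [hrest, Function.update_self]
      ring
    have eI' : ∑ t, Stmt7Aux.interf G (Function.update p j q) t * β t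
        = (∑ t, Stmt7Aux.interf G p t * β t)
          + ∑ t : (k : Fin K) × Fin (M k), G t.1 t.2 j * (q t.1 - p j t.1) * β t := by
      rw [← Finset.sum_add_distrib]
      exact Finset.sum_congr rfl fun t _ => by rw [eI t]; ring
    rw [eU, eI'] at hm
    have hsum : ∑ t : (k : Fin K) × Fin (M k), G t.1 t.2 j * (q t.1 - p j t.1) * β t
        = -∑ k, (∑ i, G k i j * (-β ⟨k, i⟩)) * (q k - p j k) := by
      rw [← Finset.univ_sigma_univ, Finset.sum_sigma, ← Finset.sum_neg_distrib]
      refine Finset.sum_congr rfl fun k _ => ?_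
      rw [Finset.sum_mul, ← Finset.sum_neg_distrib]
      exact Finset.sum_congr rfl fun i _ => by ring
    rw [hsum] at hm
    linarith
  -- positivity of the multipliers α
  have hαpos : ∀ j, 0 < α j := by
    by_contra hcon
    push_neg at hcon
    obtain ⟨j, hj⟩ := hcon
    have hj0 : α j = 0 := le_antisymm hj (hαneg j)
    -- the coefficients r j k all vanish
    have hsum_upd : ∀ (k₀ : Fin K) (v : ℝ),
        ∑ k, (∑ i, G k i j * (-β ⟨k, i⟩)) * (Function.update (p j) k₀ v k - p j k)
          = (∑ i, G k₀ i j * (-β ⟨k₀, i⟩)) * (v - p j k₀) := by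
      intro k₀ v
      rw [Finset.sum_eq_sum_sdiff_singleton_add (Finset.mem_univ k₀)]
      have hrest : ∑ k ∈ Finset.univ \ {k₀},
          (∑ i, G k i j * (-β ⟨k, i⟩)) * (Function.update (p j) k₀ v k - p j k) = 0 := by
        refine Finset.sum_eq_zero fun k hk => ?_
        have : k ≠ k₀ := by simpa using (Finset.mem_sdiff.1 hk).2
        rw [Function.update_of_ne this]
        ring
      rw [hrest, Function.update_self, zero_add]
    have hr0 : ∀ k, (∑ i, G k i j * (-β ⟨k, i⟩)) = 0 := by
      intro k
      have h1 := hkey j (Function.update (p j) k (p j k + 1))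
      have h2 := hkey j (Function.update (p j) k (p j k - 1))
      rw [hj0, hsum_upd] at h1 h2
      simp only [zero_mul] at h1 h2
      nlinarith
    -- hence all the β vanish
    have hβ0 : ∀ t : (k : Fin K) × Fin (M k), β t = 0 := by
      intro t
      have h1 := hr0 t.1
      have h2 : ∀ i ∈ Finset.univ, (0:ℝ) ≤ G t.1 i j * (-β ⟨t.1, i⟩) :=
        fun i _ => mul_nonneg (hG t.1 i j).le (by linarith [hβneg ⟨t.1, i⟩])
      have h3 := (Finset.sum_eq_zero_iff_of_nonneg h2).1 h1 t.2 (Finset.mem_univ _)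
      have h4 : -β ⟨t.1, t.2⟩ = 0 := by
        rcases mul_eq_zero.1 h3 with h | h
        · exact absurd h (ne_of_gt (hG t.1 t.2 j))
        · exact h
      have : β ⟨t.1, t.2⟩ = 0 := by linarith
      simpa using this
    -- some α is positive
    have hex : ∃ j₁, α j₁ ≠ 0 := by
      by_contra hall
      push_neg at hall
      have e1 : f y1 = 0 := by
        rw [hsplit]; simp [hall, hβ0]
      have e2 : f x₀ = 0 := by
        rw [hsplit]; simp [hall, hβ0]
      rw [e1, e2] at hy1lt
      exact lt_irrefl 0 hy1lt
    obtain ⟨j₁, hj₁⟩ := hex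
    have hj₁pos : 0 < α j₁ := lt_of_le_of_ne (hαneg j₁) (Ne.symm hj₁)
    -- then p j₁ is a global maximiser of U j₁, contradicting monotonicity
    set k₀ : Fin K := ⟨0, hK⟩ with hk₀
    set q : Fin K → ℝ := Function.update (p j₁) k₀ (p j₁ k₀ + 1) with hqdef
    have h1 := hkey j₁ q
    have h2 : ∑ k, (∑ i, G k i j₁ * (-β ⟨k, i⟩)) * (q k - p j₁ k) = 0 := by
      refine Finset.sum_eq_zero fun k _ => ?_
      have : (∑ i, G k i j₁ * (-β ⟨k, i⟩)) = 0 :=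
        Finset.sum_eq_zero fun i _ => by rw [hβ0 ⟨k, i⟩]; ring
      rw [this, zero_mul]
    rw [h2] at h1
    have h3 : U j₁ q ≤ U j₁ (p j₁) := by nlinarith
    have h4 : U j₁ (p j₁) < U j₁ q := by
      have := hU_mono j₁ (p j₁) k₀ (p j₁ k₀) (p j₁ k₀ + 1) (lt_add_one _)
      rwa [Function.update_eq_self] at this
    linarith
  -- assemble the answer
  refine ⟨fun k i => -β ⟨k, i⟩, fun j => ∑ k, (∑ i, G k i j * (-β ⟨k, i⟩)) * p j k,
    fun k i => ?_, fun j => le_refl _, fun j q hq => ?_⟩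
  · show (0:ℝ) ≤ -β ⟨k, i⟩
    linarith [hβneg ⟨k, i⟩]
  have h1 := hkey j q
  have h2 : ∑ k, (∑ i, G k i j * (-β ⟨k, i⟩)) * (q k - p j k)
      = (∑ k, (∑ i, G k i j * (-β ⟨k, i⟩)) * q k)
        - ∑ k, (∑ i, G k i j * (-β ⟨k, i⟩)) * p j k := by
    rw [← Finset.sum_sub_distrib]
    exact Finset.sum_congr rfl fun k _ => by ring
  rw [h2] at h1
  nlinarith [hαpos j]
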